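/- Let A be a unital associative K-algebra and α a unital partial action of G on A, with 1_g denoting the (central idempotent) unit of the ideal A_g. Then the map π : G → End₀(A) defined by π(g)(a) := α_g(1_{g⁻¹}·a) is an ideal partial representation of G on A; i.e. each π(g) is an algebra endomorphism with image the ideal A_g, π(1) = id, π(g⁻¹)π(g)π(h) = π(g⁻¹)π(gh), and π(g)π(h)π(h⁻¹) = π(gh)π(h⁻¹). -/
import Mathlib


/-- From a unital partial action `α` of `G` on a unital associative algebra `A`
(with ideals `A_g = e g * A` generated by central idempotents `e g`), the map
`π g a := α g (e g⁻¹ * a)` is an ideal partial representation of `G` on `A`. -/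
theorem stmt9 {K G A : Type*} [CommRing K] [Group G] [Ring A] [Algebra K A]
    (e : G → A) (α : G → A → A)
    (he_idem : ∀ g : G, e g * e g = e g)
    (he_central : ∀ (g : G) (a : A), e g * a = a * e g)
    (he_one : e 1 = 1)
    -- α_g maps A_{g⁻¹} = {a | e g⁻¹ * a = a} into A_g
    (hmaps : ∀ (g : G) (a : A), e g⁻¹ * a = a → e g * α g a = α g a)
    -- α_g is additive, K-linear and multiplicative on A_{g⁻¹}
    (hadd : ∀ (g : G) (a b : A), e g⁻¹ * a = a → e g⁻¹ * b = b →
      α g (a + b) = α g a + α g b)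
    (hsmul : ∀ (g : G) (k : K) (a : A), e g⁻¹ * a = a → α g (k • a) = k • α g a)
    (hmul : ∀ (g : G) (a b : A), e g⁻¹ * a = a → e g⁻¹ * b = b →
      α g (a * b) = α g a * α g b)
    -- α₁ = id
    (hone : ∀ a : A, α 1 a = a)
    -- α_{g⁻¹} is inverse to α_g
    (hinv : ∀ (g : G) (a : A), e g⁻¹ * a = a → α g⁻¹ (α g a) = a)
    -- α_g(A_{g⁻¹} ∩ A_{g⁻¹h}) ⊆ A_g ∩ A_h
    (hdom : ∀ (g h : G) (a : A), e g⁻¹ * a = a → e (g⁻¹ * h) * a = a →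
      e h * α g a = α g a)
    -- α_g ∘ α_h = α_{gh} on A_{h⁻¹} ∩ A_{h⁻¹g⁻¹}
    (hcomp : ∀ (g h : G) (a : A), e h⁻¹ * a = a → e (h⁻¹ * g⁻¹) * a = a →
      α g (α h a) = α (g * h) a) :
    letI π : G → A → A := fun g a => α g (e g⁻¹ * a)
    -- each π g is an algebra endomorphism of A
    (∀ (g : G) (a b : A), π g (a * b) = π g a * π g b) ∧
    (∀ (g : G) (a b : A), π g (a + b) = π g a + π g b) ∧
    (∀ (g : G) (k : K) (a : A), π g (k • a) = k • π g a) ∧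
    -- the image of π g is the ideal A_g = e g * A
    (∀ g : G, Set.range (π g) = {a : A | e g * a = a}) ∧
    -- π is a partial representation
    (∀ a : A, π 1 a = a) ∧
    (∀ (g h : G) (a : A), π g⁻¹ (π g (π h a)) = π g⁻¹ (π (g * h) a)) ∧
    (∀ (g h : G) (a : A), π g (π h (π h⁻¹ a)) = π (g * h) (π h⁻¹ a)) := by
  beta_reduce
  -- convenient idempotent facts
  have hfix : ∀ (g : G) (a : A), e g * (e g * a) = e g * a := fun g a => by
    rw [← mul_assoc, he_idem]
  have hswap : ∀ (g h : G) (a : A), e g * (e h * a) = e h * (e g * a) := fun g h a => by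
    rw [← mul_assoc, he_central g (e h), mul_assoc]
  -- key lemma : α g (e g⁻¹ * e (g⁻¹ h)) = e g * e h
  have hu : ∀ g h : G, α g (e g⁻¹ * e (g⁻¹ * h)) = e g * e h := by
    intro g h
    set u := α g (e g⁻¹ * e (g⁻¹ * h)) with hudef
    have hcond1 : e g⁻¹ * (e g⁻¹ * e (g⁻¹ * h)) = e g⁻¹ * e (g⁻¹ * h) := hfix _ _
    have hcond2 : e (g⁻¹ * h) * (e g⁻¹ * e (g⁻¹ * h)) = e g⁻¹ * e (g⁻¹ * h) := by
      rw [hswap, he_idem]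
    have hug : e g * u = u := hmaps g _ hcond1
    have huh : e h * u = u := hdom g h _ hcond1 hcond2
    set z := e g * e h with hzdef
    have hzg : e g * z = z := hfix _ _
    have hzg' : e g⁻¹⁻¹ * z = z := by rw [inv_inv]; exact hzg
    have hzh : e h * z = z := by rw [hzdef, hswap, he_idem]
    set w := α g⁻¹ z with hwdef
    have hw1 : e g⁻¹ * w = w := hmaps g⁻¹ z hzg'
    have hw2 : e (g⁻¹ * h) * w = w := by
      have h3 : e (g⁻¹⁻¹ * (g⁻¹ * h)) * z = z := by
        rw [show g⁻¹⁻¹ * (g⁻¹ * h) = h by group]; exact hzh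
      exact hdom g⁻¹ (g⁻¹ * h) z hzg' h3
    have hzw : α g w = z := by
      have h4 := hinv g⁻¹ z hzg'
      rwa [inv_inv] at h4
    have huz : u * z = z := by
      rw [← hzw, hudef, ← hmul g _ w hcond1 hw1]
      congr 1
      rw [mul_assoc, hw2, hw1]
    have h1 : z * u = u := by rw [hzdef, mul_assoc, huh, hug]
    have h2 : z * u = u * z := by
      rw [hzdef, mul_assoc, he_central h u, ← mul_assoc, he_central g u, mul_assoc]
    calc u = z * u := h1.symm
      _ = u * z := h2
      _ = z := huz
  -- key lemma : e h * α g (e g⁻¹ * a) = α g (e g⁻¹ * (e (g⁻¹ h) * a))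
  have L2 : ∀ (g h : G) (a : A),
      e h * α g (e g⁻¹ * a) = α g (e g⁻¹ * (e (g⁻¹ * h) * a)) := by
    intro g h a
    have hca : e g⁻¹ * (e g⁻¹ * a) = e g⁻¹ * a := hfix _ _
    have hcu : e g⁻¹ * (e g⁻¹ * e (g⁻¹ * h)) = e g⁻¹ * e (g⁻¹ * h) := hfix _ _
    calc e h * α g (e g⁻¹ * a)
        = e h * (e g * α g (e g⁻¹ * a)) := by rw [hmaps g _ hca]
      _ = (e g * e h) * α g (e g⁻¹ * a) := by
          rw [← mul_assoc, ← he_central h (e g)]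
      _ = α g (e g⁻¹ * e (g⁻¹ * h)) * α g (e g⁻¹ * a) := by rw [hu]
      _ = α g ((e g⁻¹ * e (g⁻¹ * h)) * (e g⁻¹ * a)) := (hmul g _ _ hcu hca).symm
      _ = α g (e g⁻¹ * (e (g⁻¹ * h) * a)) := by
          congr 1
          rw [mul_assoc, hswap (g⁻¹ * h) g⁻¹, hfix, ← mul_assoc,
            ← he_central (g⁻¹ * h), mul_assoc]
  -- π g⁻¹ ∘ π g is multiplication by e g⁻¹
  have hgg : ∀ (g : G) (b : A), α g⁻¹ (e g⁻¹⁻¹ * α g (e g⁻¹ * b)) = e g⁻¹ * b := by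
    intro g b
    rw [inv_inv, hmaps g _ (hfix _ _), hinv g _ (hfix _ _)]
  refine ⟨?_, ?_, ?_, ?_, ?_, ?_, ?_⟩
  · -- multiplicative
    intro g a b
    show α g (e g⁻¹ * (a * b)) = α g (e g⁻¹ * a) * α g (e g⁻¹ * b)
    have key : (e g⁻¹ * a) * (e g⁻¹ * b) = e g⁻¹ * (a * b) := by
      rw [mul_assoc, ← mul_assoc a, ← he_central, mul_assoc, hfix, ← mul_assoc]
    rw [← key, hmul g _ _ (hfix _ _) (hfix _ _)]
  · -- additive
    intro g a b
    show α g (e g⁻¹ * (a + b)) = α g (e g⁻¹ * a) + α g (e g⁻¹ * b)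
    rw [mul_add, hadd g _ _ (hfix _ _) (hfix _ _)]
  · -- K-linear
    intro g k a
    show α g (e g⁻¹ * (k • a)) = k • α g (e g⁻¹ * a)
    rw [mul_smul_comm, hsmul g k _ (hfix _ _)]
  · -- range
    intro g
    ext x
    constructor
    · rintro ⟨a, rfl⟩
      exact hmaps g _ (hfix _ _)
    · intro hx
      refine ⟨α g⁻¹ x, ?_⟩
      have hx' : e g⁻¹⁻¹ * x = x := by rw [inv_inv]; exact hx
      show α g (e g⁻¹ * α g⁻¹ x) = x
      rw [hmaps g⁻¹ x hx']
      have h5 := hinv g⁻¹ x hx'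
      rwa [inv_inv] at h5
  · -- π 1 = id
    intro a
    show α 1 (e 1⁻¹ * a) = a
    rw [hone, inv_one, he_one, one_mul]
  · -- π g⁻¹ π g π h = π g⁻¹ π (g h)
    intro g h a
    rw [hgg]
    show e g⁻¹ * α h (e h⁻¹ * a) = α g⁻¹ (e g⁻¹⁻¹ * α (g * h) (e (g * h)⁻¹ * a))
    rw [inv_inv, L2 h g⁻¹ a]
    have step : e g * α (g * h) (e (g * h)⁻¹ * a)
        = α (g * h) (e (g * h)⁻¹ * (e h⁻¹ * a)) := by
      rw [L2 (g * h) g a, show (g * h)⁻¹ * g = h⁻¹ by group]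
    rw [step]
    have hc1 : e (g * h)⁻¹ * (e (g * h)⁻¹ * (e h⁻¹ * a)) = e (g * h)⁻¹ * (e h⁻¹ * a) :=
      hfix _ _
    have hc2 : e ((g * h)⁻¹ * g⁻¹⁻¹) * (e (g * h)⁻¹ * (e h⁻¹ * a))
        = e (g * h)⁻¹ * (e h⁻¹ * a) := by
      rw [show (g * h)⁻¹ * g⁻¹⁻¹ = h⁻¹ by group, hswap, hfix]
    rw [hcomp g⁻¹ (g * h) _ hc1 hc2, show g⁻¹ * (g * h) = h by group,
      mul_inv_rev, hswap]
  · -- π g π h π h⁻¹ = π (g h) π h⁻¹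
    intro g h a
    have hb : e h⁻¹ * (α h⁻¹ (e h⁻¹⁻¹ * a)) = α h⁻¹ (e h⁻¹⁻¹ * a) :=
      hmaps h⁻¹ _ (hfix _ _)
    show α g (e g⁻¹ * α h (e h⁻¹ * α h⁻¹ (e h⁻¹⁻¹ * a))) = α (g * h) (e (g * h)⁻¹ * α h⁻¹ (e h⁻¹⁻¹ * a))
    set b := α h⁻¹ (e h⁻¹⁻¹ * a) with hbdef
    have hb' : e h⁻¹ * b = b := hb
    rw [hb', show α h b = α h (e h⁻¹ * b) by rw [hb'], L2 h g⁻¹ b]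
    have hc1 : e h⁻¹ * (e h⁻¹ * (e (h⁻¹ * g⁻¹) * b)) = e h⁻¹ * (e (h⁻¹ * g⁻¹) * b) :=
      hfix _ _
    have hc2 : e (h⁻¹ * g⁻¹) * (e h⁻¹ * (e (h⁻¹ * g⁻¹) * b))
        = e h⁻¹ * (e (h⁻¹ * g⁻¹) * b) := by
      rw [hswap, hfix]
    rw [hcomp g h _ hc1 hc2]
    congr 1
    rw [mul_inv_rev, ← hb', hswap h⁻¹ (h⁻¹ * g⁻¹), hfix, hswap]
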